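/- Let A⁰, A¹ : ℝ³ → ℝ³ be C¹ vector fields, identified with the 1-forms A₁dx + A₂dy + A₃dz, whose first two components agree at every point of the plane {z = 0}: A⁰₁(x,y,0) = A¹₁(x,y,0) and A⁰₂(x,y,0) = A¹₂(x,y,0) for all x, y ∈ ℝ. Let p ∈ ℝ³ be a point with third coordinate 0 and suppose that ⟨Aʲ(p), curl Aʲ(p)⟩ > 0 for j = 0, 1. Then for every s ∈ [0,1] the interpolated field Aˢ = (1−s)A⁰ + sA¹ satisfies ⟨Aˢ(p), curl Aˢ(p)⟩ > 0; indeed the function s ↦ ⟨Aˢ(p), curl Aˢ(p)⟩ is affine in s. Hence a convex combination of two positive contact forms which induce the same characteristic foliation on the plane {z = 0} (i.e. have equal horizontal parts there) is again a positive contact form at every point of that plane. -/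

import Mathlib

/-- Partial derivative in the first coordinate of a function on `ℝ³`. -/
noncomputable def pd1 (f : ℝ × ℝ × ℝ → ℝ) (q : ℝ × ℝ × ℝ) : ℝ :=
  fderiv ℝ f q (1, 0, 0)

/-- Partial derivative in the second coordinate of a function on `ℝ³`. -/
noncomputable def pd2 (f : ℝ × ℝ × ℝ → ℝ) (q : ℝ × ℝ × ℝ) : ℝ :=
  fderiv ℝ f q (0, 1, 0)

/-- Partial derivative in the third coordinate of a function on `ℝ³`. -/
noncomputable def pd3 (f : ℝ × ℝ × ℝ → ℝ) (q : ℝ × ℝ × ℝ) : ℝ :=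
  fderiv ℝ f q (0, 0, 1)

/-- The curl of a vector field on `ℝ³`. -/
noncomputable def curl3 (A : ℝ × ℝ × ℝ → ℝ × ℝ × ℝ) (q : ℝ × ℝ × ℝ) : ℝ × ℝ × ℝ :=
  (pd2 (fun r => (A r).2.2) q - pd3 (fun r => (A r).2.1) q,
   pd3 (fun r => (A r).1) q - pd1 (fun r => (A r).2.2) q,
   pd1 (fun r => (A r).2.1) q - pd2 (fun r => (A r).1) q)

/-- The Euclidean inner product on `ℝ³`. -/
def dot3 (u v : ℝ × ℝ × ℝ) : ℝ :=
  u.1 * v.1 + u.2.1 * v.2.1 + u.2.2 * v.2.2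

lemma fderiv_combo_aux (f g : ℝ × ℝ × ℝ → ℝ) (p : ℝ × ℝ × ℝ)
    (hf : DifferentiableAt ℝ f p) (hg : DifferentiableAt ℝ g p) (a b : ℝ) (v : ℝ × ℝ × ℝ) :
    fderiv ℝ (fun r => a * f r + b * g r) p v
      = a * fderiv ℝ f p v + b * fderiv ℝ g p v := by
  rw [fderiv_fun_add (hf.const_mul a) (hg.const_mul b), fderiv_const_mul hf, fderiv_const_mul hg]
  simp

lemma pd1_zero_of_plane (g : ℝ × ℝ × ℝ → ℝ) (p : ℝ × ℝ × ℝ)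
    (hg : DifferentiableAt ℝ g p) (h0 : ∀ x y : ℝ, g (x, y, 0) = 0) (hp : p.2.2 = 0) :
    pd1 g p = 0 := by
  have hpe : ((p.1, p.2.1, (0:ℝ)) : ℝ × ℝ × ℝ) = p := by rw [← hp]
  have hγ : HasDerivAt (fun t : ℝ => ((p.1 + t, p.2.1, (0:ℝ)) : ℝ × ℝ × ℝ))
      (((1:ℝ), (0:ℝ), (0:ℝ)) : ℝ × ℝ × ℝ) 0 := by
    apply HasDerivAt.prodMk
    · simpa using (hasDerivAt_id (0:ℝ)).const_add p.1
    · exact (hasDerivAt_const _ _).prodMk (hasDerivAt_const _ _)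
  have hγ0 : (fun t : ℝ => ((p.1 + t, p.2.1, (0:ℝ)) : ℝ × ℝ × ℝ)) 0 = p := by simp [hpe]
  have hcomp : HasDerivAt (fun t : ℝ => g (p.1 + t, p.2.1, 0))
      (fderiv ℝ g p (1, 0, 0)) 0 := by
    have hF : HasFDerivAt g (fderiv ℝ g p)
        ((fun t : ℝ => ((p.1 + t, p.2.1, (0:ℝ)) : ℝ × ℝ × ℝ)) 0) := by
      rw [hγ0]; exact hg.hasFDerivAt
    exact hF.comp_hasDerivAt 0 hγ
  have h0' : (fun t : ℝ => g (p.1 + t, p.2.1, 0)) = fun _ => 0 := by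
    funext t; exact h0 _ _
  rw [h0'] at hcomp
  have := (hasDerivAt_const (0:ℝ) (0:ℝ)).unique hcomp
  simpa [pd1] using this.symm

lemma pd2_zero_of_plane (g : ℝ × ℝ × ℝ → ℝ) (p : ℝ × ℝ × ℝ)
    (hg : DifferentiableAt ℝ g p) (h0 : ∀ x y : ℝ, g (x, y, 0) = 0) (hp : p.2.2 = 0) :
    pd2 g p = 0 := by
  have hpe : ((p.1, p.2.1, (0:ℝ)) : ℝ × ℝ × ℝ) = p := by rw [← hp]
  have hγ : HasDerivAt (fun t : ℝ => ((p.1, p.2.1 + t, (0:ℝ)) : ℝ × ℝ × ℝ))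
      (((0:ℝ), (1:ℝ), (0:ℝ)) : ℝ × ℝ × ℝ) 0 := by
    apply HasDerivAt.prodMk
    · exact hasDerivAt_const _ _
    · apply HasDerivAt.prodMk
      · simpa using (hasDerivAt_id (0:ℝ)).const_add p.2.1
      · exact hasDerivAt_const _ _
  have hγ0 : (fun t : ℝ => ((p.1, p.2.1 + t, (0:ℝ)) : ℝ × ℝ × ℝ)) 0 = p := by simp [hpe]
  have hcomp : HasDerivAt (fun t : ℝ => g (p.1, p.2.1 + t, 0))
      (fderiv ℝ g p (0, 1, 0)) 0 := by
    have hF : HasFDerivAt g (fderiv ℝ g p)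
        ((fun t : ℝ => ((p.1, p.2.1 + t, (0:ℝ)) : ℝ × ℝ × ℝ)) 0) := by
      rw [hγ0]; exact hg.hasFDerivAt
    exact hF.comp_hasDerivAt 0 hγ
  have h0' : (fun t : ℝ => g (p.1, p.2.1 + t, 0)) = fun _ => 0 := by
    funext t; exact h0 _ _
  rw [h0'] at hcomp
  have := (hasDerivAt_const (0:ℝ) (0:ℝ)).unique hcomp
  simpa [pd2] using this.symm

lemma curl3_smul_add (A₀ A₁ : ℝ × ℝ × ℝ → ℝ × ℝ × ℝ)
    (hA₀ : Differentiable ℝ A₀) (hA₁ : Differentiable ℝ A₁) (a b : ℝ) (p : ℝ × ℝ × ℝ) :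
    curl3 (fun q => a • A₀ q + b • A₁ q) p = a • curl3 A₀ p + b • curl3 A₁ p := by
  have d01 : DifferentiableAt ℝ (fun r => (A₀ r).1) p := (hA₀ p).fst
  have d02 : DifferentiableAt ℝ (fun r => (A₀ r).2.1) p := (hA₀ p).snd.fst
  have d03 : DifferentiableAt ℝ (fun r => (A₀ r).2.2) p := (hA₀ p).snd.snd
  have d11 : DifferentiableAt ℝ (fun r => (A₁ r).1) p := (hA₁ p).fst
  have d12 : DifferentiableAt ℝ (fun r => (A₁ r).2.1) p := (hA₁ p).snd.fst
  have d13 : DifferentiableAt ℝ (fun r => (A₁ r).2.2) p := (hA₁ p).snd.snd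
  have e1 : (fun r => ((a • A₀ r + b • A₁ r).1)) = fun r => a * (A₀ r).1 + b * (A₁ r).1 := by
    funext r; simp
  have e2 : (fun r => ((a • A₀ r + b • A₁ r).2.1)) = fun r => a * (A₀ r).2.1 + b * (A₁ r).2.1 := by
    funext r; simp
  have e3 : (fun r => ((a • A₀ r + b • A₁ r).2.2)) = fun r => a * (A₀ r).2.2 + b * (A₁ r).2.2 := by
    funext r; simp
  simp only [curl3, e1, e2, e3, pd1, pd2, pd3]
  rw [fderiv_combo_aux _ _ _ d03 d13, fderiv_combo_aux _ _ _ d03 d13,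
      fderiv_combo_aux _ _ _ d02 d12, fderiv_combo_aux _ _ _ d02 d12,
      fderiv_combo_aux _ _ _ d01 d11, fderiv_combo_aux _ _ _ d01 d11]
  simp [Prod.ext_iff, smul_eq_mul]
  constructor
  · ring
  constructor
  · ring
  · ring

theorem convex_combination_contact_on_plane
    (A₀ A₁ : ℝ × ℝ × ℝ → ℝ × ℝ × ℝ)
    (hA₀ : ContDiff ℝ 1 A₀) (hA₁ : ContDiff ℝ 1 A₁)
    (hhor₁ : ∀ x y : ℝ, (A₀ (x, y, 0)).1 = (A₁ (x, y, 0)).1)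
    (hhor₂ : ∀ x y : ℝ, (A₀ (x, y, 0)).2.1 = (A₁ (x, y, 0)).2.1)
    (p : ℝ × ℝ × ℝ) (hp : p.2.2 = 0)
    (h₀ : 0 < dot3 (A₀ p) (curl3 A₀ p))
    (h₁ : 0 < dot3 (A₁ p) (curl3 A₁ p)) :
    (∀ s ∈ Set.Icc (0 : ℝ) 1,
      0 < dot3 ((1 - s) • A₀ p + s • A₁ p)
        (curl3 (fun q => (1 - s) • A₀ q + s • A₁ q) p)) ∧
    ∃ c d : ℝ, ∀ s : ℝ,
      dot3 ((1 - s) • A₀ p + s • A₁ p)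
        (curl3 (fun q => (1 - s) • A₀ q + s • A₁ q) p) = c + d * s := by
  have hd₀ : Differentiable ℝ A₀ := hA₀.differentiable one_ne_zero
  have hd₁ : Differentiable ℝ A₁ := hA₁.differentiable one_ne_zero
  have hpe : ((p.1, p.2.1, (0:ℝ)) : ℝ × ℝ × ℝ) = p := by rw [← hp]
  -- equal horizontal components at p
  have hu1 : (A₀ p).1 = (A₁ p).1 := by rw [← hpe]; exact hhor₁ _ _
  have hu2 : (A₀ p).2.1 = (A₁ p).2.1 := by rw [← hpe]; exact hhor₂ _ _
  -- equal third components of curl at p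
  have hg1 : pd2 (fun r => (A₁ r).1 - (A₀ r).1) p = 0 := by
    apply pd2_zero_of_plane _ _ (((hd₁ p).fst).fun_sub ((hd₀ p).fst)) _ hp
    intro x y; rw [hhor₁ x y]; ring
  have hg2 : pd1 (fun r => (A₁ r).2.1 - (A₀ r).2.1) p = 0 := by
    apply pd1_zero_of_plane _ _ (((hd₁ p).snd.fst).fun_sub ((hd₀ p).snd.fst)) _ hp
    intro x y; rw [hhor₂ x y]; ring
  have hsub1 : pd2 (fun r => (A₁ r).1) p = pd2 (fun r => (A₀ r).1) p := by
    have := hg1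
    rw [pd2, fderiv_fun_sub ((hd₁ p).fst) ((hd₀ p).fst)] at this
    simp only [ContinuousLinearMap.sub_apply] at this
    rw [pd2, pd2]; linarith
  have hsub2 : pd1 (fun r => (A₁ r).2.1) p = pd1 (fun r => (A₀ r).2.1) p := by
    have := hg2
    rw [pd1, fderiv_fun_sub ((hd₁ p).snd.fst) ((hd₀ p).snd.fst)] at this
    simp only [ContinuousLinearMap.sub_apply] at this
    rw [pd1, pd1]; linarith
  have hw3 : (curl3 A₀ p).2.2 = (curl3 A₁ p).2.2 := by
    simp only [curl3]
    rw [hsub1, hsub2]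
  -- key affine formula
  set C := dot3 (A₀ p) (curl3 A₀ p) with hC
  set D := dot3 (A₁ p) (curl3 A₁ p) with hD
  have key : ∀ s : ℝ,
      dot3 ((1 - s) • A₀ p + s • A₁ p)
        (curl3 (fun q => (1 - s) • A₀ q + s • A₁ q) p) = (1 - s) * C + s * D := by
    intro s
    rw [curl3_smul_add A₀ A₁ hd₀ hd₁ (1 - s) s p]
    simp only [dot3, hC, hD, Prod.fst_add, Prod.snd_add, Prod.smul_fst, Prod.smul_snd,
      smul_eq_mul]
    rw [hu1, hu2, hw3]
    ring
  constructor
  · intro s hs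
    rw [key s]
    rcases lt_or_eq_of_le hs.1 with h | h
    · nlinarith [mul_nonneg (sub_nonneg.2 hs.2) h₀.le, mul_pos h h₁]
    · rw [← h]; simpa using h₀
  · exact ⟨C, D - C, fun s => by rw [key s]; ring⟩
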